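/- (Bochner's double-limit criterion) A continuous function f : ℝ → ℂ is almost automorphic if and only if for every sequence (s_m) of real numbers one can extract a subsequence (s_{m_k}) such that for every x ∈ ℝ the iterated limit lim_{l→∞} lim_{k→∞} f(x + s_{m_k} − s_{m_l}) exists and equals f(x) (that is, for each l and x the inner limit over k exists, and the resulting limit over l equals f(x)). -/
import Mathlib


open Filter MeasureTheory

/-- A continuous function `f : ℝ → ℂ` is almost automorphic if for every sequence of reals
there is a subsequence along which the translates converge pointwise to some `g`, and the
back-translates of `g` converge pointwise to `f`. -/
def AlmostAutomorphic (f : ℝ → ℂ) : Prop :=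
  Continuous f ∧ ∀ s : ℕ → ℝ, ∃ σ : ℕ → ℕ, StrictMono σ ∧ ∃ g : ℝ → ℂ,
    (∀ x : ℝ, Tendsto (fun k => f (x + s (σ k))) atTop (nhds (g x))) ∧
    (∀ x : ℝ, Tendsto (fun k => g (x - s (σ k))) atTop (nhds (f x)))

/-- Bochner's double-limit criterion: a continuous function f is almost automorphic iff from
every sequence of reals one can extract a subsequence along which, for every x, the inner
limit over k of f (x + s (σ k) - s (σ l)) exists and the resulting limit over l equals f x. -/
theorem almostAutomorphic_iff_double_limit (f : ℝ → ℂ) (hf : Continuous f) :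
    AlmostAutomorphic f ↔
    ∀ s : ℕ → ℝ, ∃ σ : ℕ → ℕ, StrictMono σ ∧ ∃ F : ℕ → ℝ → ℂ,
      (∀ l : ℕ, ∀ x : ℝ,
        Tendsto (fun k => f (x + s (σ k) - s (σ l))) atTop (nhds (F l x))) ∧
      (∀ x : ℝ, Tendsto (fun l => F l x) atTop (nhds (f x))) := by
  constructor
  · rintro ⟨-, h⟩ s
    obtain ⟨σ, hσ, g, hg1, hg2⟩ := h s
    refine ⟨σ, hσ, fun l x => g (x - s (σ l)), fun l x => ?_, fun x => hg2 x⟩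
    have := hg1 (x - s (σ l))
    convert this using 2 with k
    ring_nf
  · intro h
    refine ⟨hf, fun s => ?_⟩
    obtain ⟨σ, hσ, F, hF1, hF2⟩ := h s
    set g : ℝ → ℂ := fun x => F 0 (x + s (σ 0)) with hg
    have key : ∀ x : ℝ, Tendsto (fun k => f (x + s (σ k))) atTop (nhds (g x)) := by
      intro x
      have := hF1 0 (x + s (σ 0))
      convert this using 2 with k
      ring_nf
    refine ⟨σ, hσ, g, key, fun x => ?_⟩
    have heq : ∀ l : ℕ, g (x - s (σ l)) = F l x := by
      intro l
      have h1 := key (x - s (σ l))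
      have h2 := hF1 l x
      have h2' : Tendsto (fun k => f (x - s (σ l) + s (σ k))) atTop (nhds (F l x)) := by
        convert h2 using 2 with k; ring_nf
      exact tendsto_nhds_unique h1 h2'
    simpa only [heq] using hF2 x
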